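/- Let E be a real inner product space, let T > 0 and κ ≥ 0, and let γ : ℝ → E be a twice continuously differentiable curve such that for all t ∈ [0, T] one has ‖γ(t)‖ = 1, ‖γ'(t)‖ = 1, and ‖γ''(t)‖ ≤ κ. Then for every t ∈ [0, T], -⟨γ''(t), γ(0)⟩ ≤ 1 + κ²t²/2. -/

import Mathlib

open RealInnerProductSpace

theorem stmt_2 {E : Type*} [NormedAddCommGroup E] [InnerProductSpace ℝ E]
    (T κ : ℝ) (hT : 0 < T) (hκ : 0 ≤ κ) (γ : ℝ → E)
    (hγ : ContDiff ℝ 2 γ)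
    (hsphere : ∀ t ∈ Set.Icc (0 : ℝ) T, ‖γ t‖ = 1)
    (hspeed : ∀ t ∈ Set.Icc (0 : ℝ) T, ‖deriv γ t‖ = 1)
    (hcurv : ∀ t ∈ Set.Icc (0 : ℝ) T, ‖deriv (deriv γ) t‖ ≤ κ) :
    ∀ t ∈ Set.Icc (0 : ℝ) T, -⟪deriv (deriv γ) t, γ 0⟫ ≤ 1 + κ ^ 2 * t ^ 2 / 2 := by
  have hdγ : Differentiable ℝ γ := hγ.differentiable two_ne_zero
  have hγ1 : ContDiff ℝ 1 (deriv γ) := by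
    have h2 : ContDiff ℝ ((1 : ℕ) + 1) γ := by exact_mod_cast hγ
    exact (contDiff_succ_iff_deriv.mp h2).2.2
  have hdγ' : Differentiable ℝ (deriv γ) := hγ1.differentiable one_ne_zero
  have hcont'' : Continuous (deriv (deriv γ)) := (contDiff_one_iff_deriv.mp hγ1).2
  have key : ∀ t ∈ Set.Ioo (0 : ℝ) T, -⟪deriv (deriv γ) t, γ 0⟫ ≤ 1 + κ ^ 2 * t ^ 2 / 2 := by
    intro t ht
    have htI : t ∈ Set.Icc (0 : ℝ) T := Set.Ioo_subset_Icc_self ht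
    set v := deriv (deriv γ) t with hv
    -- Step A : ⟪deriv γ s, γ s⟫ = 0 on Ioo 0 T
    have hA : ∀ s ∈ Set.Ioo (0 : ℝ) T, ⟪deriv γ s, γ s⟫ = 0 := by
      intro s hs
      have h1 : HasDerivAt (fun u => (⟪γ u, γ u⟫ : ℝ))
          (⟪γ s, deriv γ s⟫ + ⟪deriv γ s, γ s⟫) s :=
        ((hdγ s).hasDerivAt).inner ℝ ((hdγ s).hasDerivAt)
      have h2 : (fun u => (⟪γ u, γ u⟫ : ℝ)) =ᶠ[nhds s] fun _ => (1 : ℝ) := by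
        filter_upwards [Icc_mem_nhds hs.1 hs.2] with u hu
        rw [real_inner_self_eq_norm_sq, hsphere u hu]; norm_num
      have h3 : HasDerivAt (fun u => (⟪γ u, γ u⟫ : ℝ)) 0 s :=
        (hasDerivAt_const s (1 : ℝ)).congr_of_eventuallyEq h2
      have h4 := h1.unique h3
      have hc := real_inner_comm (γ s) (deriv γ s)
      linarith
    -- Step B : ⟪deriv (deriv γ) s, γ s⟫ = -1 on Ioo 0 T
    have hB : ∀ s ∈ Set.Ioo (0 : ℝ) T, ⟪deriv (deriv γ) s, γ s⟫ = -1 := by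
      intro s hs
      have h1 : HasDerivAt (fun u => (⟪deriv γ u, γ u⟫ : ℝ))
          (⟪deriv γ s, deriv γ s⟫ + ⟪deriv (deriv γ) s, γ s⟫) s :=
        ((hdγ' s).hasDerivAt).inner ℝ ((hdγ s).hasDerivAt)
      have h2 : (fun u => (⟪deriv γ u, γ u⟫ : ℝ)) =ᶠ[nhds s] fun _ => (0 : ℝ) := by
        filter_upwards [Ioo_mem_nhds hs.1 hs.2] with u hu
        exact hA u hu
      have h3 : HasDerivAt (fun u => (⟪deriv γ u, γ u⟫ : ℝ)) 0 s :=
        (hasDerivAt_const s (0 : ℝ)).congr_of_eventuallyEq h2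
      have h4 := h1.unique h3
      have h5 : (⟪deriv γ s, deriv γ s⟫ : ℝ) = 1 := by
        rw [real_inner_self_eq_norm_sq, hspeed s (Set.Ioo_subset_Icc_self hs)]; norm_num
      linarith
    -- Step C : ⟪deriv (deriv γ) s, deriv γ s⟫ = 0 on Ioo 0 T
    have hC : ∀ s ∈ Set.Ioo (0 : ℝ) T, ⟪deriv (deriv γ) s, deriv γ s⟫ = 0 := by
      intro s hs
      have h1 : HasDerivAt (fun u => (⟪deriv γ u, deriv γ u⟫ : ℝ))
          (⟪deriv γ s, deriv (deriv γ) s⟫ + ⟪deriv (deriv γ) s, deriv γ s⟫) s :=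
        ((hdγ' s).hasDerivAt).inner ℝ ((hdγ' s).hasDerivAt)
      have h2 : (fun u => (⟪deriv γ u, deriv γ u⟫ : ℝ)) =ᶠ[nhds s] fun _ => (1 : ℝ) := by
        filter_upwards [Icc_mem_nhds hs.1 hs.2] with u hu
        rw [real_inner_self_eq_norm_sq, hspeed u hu]; norm_num
      have h3 : HasDerivAt (fun u => (⟪deriv γ u, deriv γ u⟫ : ℝ)) 0 s :=
        (hasDerivAt_const s (1 : ℝ)).congr_of_eventuallyEq h2
      have h4 := h1.unique h3
      have hc := real_inner_comm (deriv γ s) (deriv (deriv γ) s)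
      linarith
    have hBt : (⟪v, γ t⟫ : ℝ) = -1 := hB t ht
    have hCt : (⟪v, deriv γ t⟫ : ℝ) = 0 := hC t ht
    have hvnorm : ‖v‖ ≤ κ := hcurv t htI
    -- Step D : ‖deriv γ u - deriv γ s‖ ≤ κ * (u - s) for 0 ≤ s ≤ u ≤ t
    have hD : ∀ s ∈ Set.Icc (0 : ℝ) t, ‖deriv γ t - deriv γ s‖ ≤ κ * (t - s) := by
      intro s hs
      have hst : s ≤ t := hs.2
      have := norm_image_sub_le_of_norm_deriv_le_segment'
        (f := deriv γ) (f' := deriv (deriv γ)) (a := s) (b := t) (C := κ)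
        (fun x _ => (hdγ' x).hasDerivAt.hasDerivWithinAt)
        (fun x hx => hcurv x ⟨le_trans hs.1 hx.1, le_trans hx.2.le ht.2.le⟩)
        t ⟨hst, le_rfl⟩
      simpa using this
    -- Step E : monotonicity argument
    set h : ℝ → ℝ := fun s => ⟪v, γ t⟫ - ⟪v, γ s⟫ - κ ^ 2 * (t - s) ^ 2 / 2 with hh
    have hderiv : ∀ u : ℝ, HasDerivAt h (κ ^ 2 * (t - u) - ⟪v, deriv γ u⟫) u := by
      intro u
      have hg : HasDerivAt (fun w => (⟪v, γ w⟫ : ℝ)) (⟪v, deriv γ u⟫) u := by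
        have := (hasDerivAt_const u v).inner ℝ ((hdγ u).hasDerivAt)
        simpa using this
      have hq : HasDerivAt (fun w => κ ^ 2 * (t - w) ^ 2 / 2)
          (-(κ ^ 2 * (t - u))) u := by
        have : HasDerivAt (fun w : ℝ => κ ^ 2 * (t - w) ^ 2 / 2)
            (κ ^ 2 * (2 * (t - u) ^ 1 * (0 - 1)) / 2) u := by
          exact (((hasDerivAt_const u t).sub (hasDerivAt_id u)).pow 2).const_mul (κ ^ 2)
            |>.div_const 2
        convert this using 1; ring
      have := ((hasDerivAt_const u (⟪v, γ t⟫ : ℝ)).sub hg).sub hq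
      exact this.congr_deriv (by ring)
    have hmono : MonotoneOn h (Set.Icc (0 : ℝ) t) := by
      apply monotoneOn_of_deriv_nonneg (convex_Icc 0 t)
        (fun u _ => ((hderiv u).differentiableAt).continuousAt.continuousWithinAt)
        (fun u _ => ((hderiv u).differentiableAt).differentiableWithinAt)
      intro u hu
      rw [interior_Icc] at hu
      rw [(hderiv u).deriv]
      have h1 : (⟪v, deriv γ u⟫ : ℝ) = ⟪v, deriv γ u - deriv γ t⟫ := by
        rw [inner_sub_right, hCt]; ring
      have h2 : (⟪v, deriv γ u - deriv γ t⟫ : ℝ) ≤ ‖v‖ * ‖deriv γ u - deriv γ t‖ :=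
        real_inner_le_norm _ _
      have h3 : ‖deriv γ u - deriv γ t‖ ≤ κ * (t - u) := by
        rw [norm_sub_rev]; exact hD u (Set.Ioo_subset_Icc_self hu)
      have h4 : ‖v‖ * ‖deriv γ u - deriv γ t‖ ≤ κ * (κ * (t - u)) := by
        apply mul_le_mul hvnorm h3 (norm_nonneg _) hκ
      nlinarith [norm_nonneg (deriv γ u - deriv γ t)]
    have h0t : h 0 ≤ h t := hmono (Set.left_mem_Icc.mpr htI.1) (Set.right_mem_Icc.mpr htI.1) htI.1
    have hht : h t = 0 := by simp [hh]
    have hh0 : h 0 = ⟪v, γ t⟫ - ⟪v, γ 0⟫ - κ ^ 2 * t ^ 2 / 2 := by simp [hh]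
    rw [hht, hh0] at h0t
    linarith
  -- extend to Icc by continuity
  have hcontL : Continuous fun t => -(⟪deriv (deriv γ) t, γ 0⟫ : ℝ) :=
    (hcont''.inner continuous_const).neg
  have hcontR : Continuous fun t : ℝ => 1 + κ ^ 2 * t ^ 2 / 2 := by continuity
  intro t ht
  have hcl : t ∈ closure (Set.Ioo (0 : ℝ) T) := by
    rwa [closure_Ioo hT.ne]
  exact le_on_closure key hcontL.continuousOn hcontR.continuousOn hcl
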